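/- Let p(n) > 0 and r(n) ≥ 0. For every solution u of Δ(p(n-1)Δu(n-1)) = r(n)u(n), the sequence φ(n) = p(n)Δu(n) is bounded if and only if Σ_{s=a}^{∞} Σ_{τ=a}^{s} r(s+1)/p(τ) < ∞. -/

import Mathlib

private lemma icc_succ (a n : ℤ) (h : a ≤ n + 1) :
    Finset.Icc a (n+1) = insert (n+1) (Finset.Icc a n) := by
  ext x; simp [Finset.mem_Icc]; omega

private lemma sum_icc_succ {f : ℤ → ℝ} {a n : ℤ} (h : a ≤ n + 1) :
    ∑ k ∈ Finset.Icc a (n+1), f k = (∑ k ∈ Finset.Icc a n, f k) + f (n+1) := by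
  rw [icc_succ a n h, Finset.sum_insert (by simp)]
  ring

private lemma lemA (p r : ℤ → ℝ) (a : ℤ) (u : ℤ → ℝ)
    (hu : ∀ n : ℤ, a ≤ n →
      p n * (u (n + 1) - u n) - p (n - 1) * (u n - u (n - 1)) = r n * u n) :
    ∀ n : ℤ, a - 1 ≤ n →
      p n * (u (n+1) - u n) = p (a-1) * (u a - u (a-1)) + ∑ k ∈ Finset.Icc a n, r k * u k := by
  refine Int.le_induction ?_ ?_
  · rw [Finset.Icc_eq_empty (by omega)]
    simp
  · intro n hn ih
    have h2 := hu (n+1) (by omega)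
    simp only [add_sub_cancel_right] at h2
    rw [sum_icc_succ (by omega)]
    linarith

private lemma lemB (u : ℤ → ℝ) (a : ℤ) :
    ∀ n : ℤ, a - 1 ≤ n →
      u n = u (a-1) + ∑ τ ∈ Finset.Icc (a-1) (n-1), (u (τ+1) - u τ) := by
  refine Int.le_induction ?_ ?_
  · rw [Finset.Icc_eq_empty (by omega)]
    simp
  · intro n hn ih
    have h1 : n + 1 - 1 = (n - 1) + 1 := by ring
    rw [h1, sum_icc_succ (by omega)]
    have h3 : n - 1 + 1 = n := by ring
    rw [h3]
    linarith

private lemma lemReidx (p r : ℤ → ℝ) (a : ℤ) :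
    ∀ N : ℕ, ∑ j ∈ Finset.range N, (∑ τ ∈ Finset.Icc a (a + (j : ℤ)), r (a + (j : ℤ) + 1) / p τ)
      = ∑ k ∈ Finset.Icc (a+1) (a + (N : ℤ)), r k * ∑ τ ∈ Finset.Icc a (k-1), 1 / p τ := by
  intro N
  induction N with
  | zero => simp [Finset.Icc_eq_empty (by omega : ¬ (a + 1 ≤ a + ((0:ℕ):ℤ)))]
  | succ N ih =>
      rw [Finset.sum_range_succ, ih]
      have hc : a + ((N+1 : ℕ) : ℤ) = (a + (N:ℤ)) + 1 := by push_cast; ring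
      rw [hc, sum_icc_succ (by omega)]
      congr 1
      have h1 : a + (N:ℤ) + 1 - 1 = a + (N:ℤ) := by ring
      rw [h1, Finset.mul_sum]
      apply Finset.sum_congr rfl
      intro τ _
      rw [div_eq_mul_one_div]


private noncomputable def mkSeq (p r : ℤ → ℝ) (a : ℤ) : ℕ → ℝ × ℝ
  | 0 => (1, 1)
  | (j+1) =>
      let x := mkSeq p r a j
      (x.2, x.2 + (p (a + (j:ℤ) - 1) * (x.2 - x.1) + r (a + (j:ℤ)) * x.2) / p (a + (j:ℤ)))

private noncomputable def mkU (p r : ℤ → ℝ) (a : ℤ) (n : ℤ) : ℝ :=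
  (mkSeq p r a (n - (a-1)).toNat).1

private lemma mkU_eq (p r : ℤ → ℝ) (a : ℤ) (j : ℕ) :
    mkU p r a (a - 1 + (j:ℤ)) = (mkSeq p r a j).1 := by
  have h : (a - 1 + (j:ℤ) - (a-1)).toNat = j := by omega
  unfold mkU
  rw [h]

private lemma mkU_snd (p r : ℤ → ℝ) (a : ℤ) (j : ℕ) :
    mkU p r a (a + (j:ℤ)) = (mkSeq p r a j).2 := by
  have h : a + (j:ℤ) = a - 1 + ((j+1 : ℕ) : ℤ) := by push_cast; ring
  rw [h, mkU_eq]
  rfl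

private lemma mkU_base (p r : ℤ → ℝ) (a : ℤ) :
    mkU p r a (a-1) = 1 ∧ mkU p r a a = 1 := by
  constructor
  · have := mkU_eq p r a 0
    simpa [mkSeq] using this
  · have := mkU_snd p r a 0
    simpa [mkSeq] using this

private lemma mkU_rec (p r : ℤ → ℝ) (a : ℤ) (hp : ∀ n : ℤ, a - 1 ≤ n → 0 < p n) :
    ∀ n : ℤ, a ≤ n →
      p n * (mkU p r a (n + 1) - mkU p r a n) - p (n - 1) * (mkU p r a n - mkU p r a (n - 1))
        = r n * mkU p r a n := by
  intro n hn
  obtain ⟨j, hj⟩ : ∃ j : ℕ, n = a + (j:ℤ) := ⟨(n - a).toNat, by omega⟩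
  subst hj
  have e1 : a + (j:ℤ) - 1 = a - 1 + (j:ℤ) := by ring
  have e2 : a + (j:ℤ) + 1 = a + ((j+1 : ℕ) : ℤ) := by push_cast; ring
  rw [e1, e2, mkU_eq, mkU_snd, mkU_snd]
  show p (a + (j:ℤ)) * (((mkSeq p r a j).2 +
      (p (a + (j:ℤ) - 1) * ((mkSeq p r a j).2 - (mkSeq p r a j).1)
        + r (a + (j:ℤ)) * (mkSeq p r a j).2) / p (a + (j:ℤ))) - (mkSeq p r a j).2)
    - p (a - 1 + (j:ℤ)) * ((mkSeq p r a j).2 - (mkSeq p r a j).1) = r (a + (j:ℤ)) * (mkSeq p r a j).2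
  have hpne : p (a + (j:ℤ)) ≠ 0 := ne_of_gt (hp _ (by omega))
  rw [← e1]
  field_simp
  ring

private lemma mkU_pos (p r : ℤ → ℝ) (a : ℤ) (hp : ∀ n : ℤ, a - 1 ≤ n → 0 < p n)
    (hr : ∀ n : ℤ, a ≤ n → 0 ≤ r n) :
    ∀ n : ℤ, a - 1 ≤ n →
      1 ≤ mkU p r a n ∧ 0 ≤ p n * (mkU p r a (n+1) - mkU p r a n) := by
  refine Int.le_induction ?_ ?_
  · obtain ⟨h1, h2⟩ := mkU_base p r a
    have e : a - 1 + 1 = a := by ring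
    rw [e, h1, h2]
    simp
  · intro n hn ih
    have hpn : 0 < p n := hp n hn
    have hu1 : 1 ≤ mkU p r a (n+1) := by
      have h := ih.2
      have : 0 ≤ mkU p r a (n+1) - mkU p r a n := nonneg_of_mul_nonneg_right h hpn
      linarith [ih.1]
    refine ⟨hu1, ?_⟩
    have h2 := mkU_rec p r a hp (n+1) (by omega)
    simp only [add_sub_cancel_right] at h2
    have hrn : 0 ≤ r (n+1) := hr (n+1) (by omega)
    nlinarith [ih.2]

private lemma mkU_mono (p r : ℤ → ℝ) (a : ℤ) (hp : ∀ n : ℤ, a - 1 ≤ n → 0 < p n)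
    (hr : ∀ n : ℤ, a ≤ n → 0 ≤ r n) (m : ℤ) (hm : a - 1 ≤ m) :
    ∀ n : ℤ, m ≤ n →
      p m * (mkU p r a (m+1) - mkU p r a m) ≤ p n * (mkU p r a (n+1) - mkU p r a n) := by
  refine Int.le_induction ?_ ?_
  · exact le_refl _
  · intro n hn ih
    have h2 := mkU_rec p r a hp (n+1) (by omega)
    simp only [add_sub_cancel_right] at h2
    have hrn : 0 ≤ r (n+1) := hr (n+1) (by omega)
    have hu1 : 1 ≤ mkU p r a (n+1) := (mkU_pos p r a hp hr (n+1) (by omega)).1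
    nlinarith

private lemma sum_icc_bot {f : ℤ → ℝ} {a m : ℤ} (h : a ≤ m) :
    ∑ k ∈ Finset.Icc a m, f k = f a + ∑ k ∈ Finset.Icc (a+1) m, f k := by
  have he : Finset.Icc a m = insert a (Finset.Icc (a+1) m) := by
    ext x; simp [Finset.mem_Icc]; omega
  rw [he, Finset.sum_insert (by intro hmem; rw [Finset.mem_Icc] at hmem; omega)]

private theorem bwd (p r : ℤ → ℝ) (a : ℤ)
    (hp : ∀ n : ℤ, a - 1 ≤ n → 0 < p n) (hr : ∀ n : ℤ, a ≤ n → 0 ≤ r n)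
    (hsum : Summable (fun j : ℕ => ∑ τ ∈ Finset.Icc a (a + (j : ℤ)), r (a + (j : ℤ) + 1) / p τ))
    (u : ℤ → ℝ)
    (hu : ∀ n : ℤ, a ≤ n →
        p n * (u (n + 1) - u n) - p (n - 1) * (u n - u (n - 1)) = r n * u n) :
    ∃ C : ℝ, ∀ n : ℤ, a - 1 ≤ n → |p n * (u (n + 1) - u n)| ≤ C := by
  have hf0 : ∀ j : ℕ, 0 ≤ ∑ τ ∈ Finset.Icc a (a + (j : ℤ)), r (a + (j : ℤ) + 1) / p τ := by
    intro j
    apply Finset.sum_nonneg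
    intro τ hτ
    rw [Finset.mem_Icc] at hτ
    exact div_nonneg (hr _ (by omega)) (le_of_lt (hp τ (by omega)))
  set T := ∑' j : ℕ, ∑ τ ∈ Finset.Icc a (a + (j : ℤ)), r (a + (j : ℤ) + 1) / p τ with hT
  have hT0 : 0 ≤ T := tsum_nonneg hf0
  have hpart : ∀ N : ℕ,
      ∑ k ∈ Finset.Icc (a+1) (a + (N : ℤ)), r k * ∑ τ ∈ Finset.Icc a (k-1), 1 / p τ ≤ T := by
    intro N
    rw [← lemReidx p r a N]
    exact Summable.sum_le_tsum (Finset.range N) (fun i _ => hf0 i) hsum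
  set B := |p (a-1) * (u a - u (a-1))| with hB
  set U0 := |u (a-1)| with hU0
  set W : ℤ → ℝ := fun n => ∑ τ ∈ Finset.Icc (a-1) (n-1), 1 / p τ with hW
  set ψ : ℤ → ℝ := fun n => B + ∑ k ∈ Finset.Icc a n, r k * |u k| with hψ
  set R : ℤ → ℝ := fun n => ∑ k ∈ Finset.Icc a n, r k with hR
  set Cc : ℤ → ℝ := fun n => ∑ k ∈ Finset.Icc a n, r k * W k with hCc
  have hB0 : 0 ≤ B := abs_nonneg _
  have hU00 : 0 ≤ U0 := abs_nonneg _
  have hW0 : ∀ n : ℤ, 0 ≤ W n := by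
    intro n
    apply Finset.sum_nonneg
    intro τ hτ
    rw [Finset.mem_Icc] at hτ
    exact one_div_nonneg.mpr (le_of_lt (hp τ (by omega)))
  have hψ0 : ∀ n : ℤ, 0 ≤ ψ n := by
    intro n
    have : 0 ≤ ∑ k ∈ Finset.Icc a n, r k * |u k| := Finset.sum_nonneg fun k hk => by
      rw [Finset.mem_Icc] at hk
      exact mul_nonneg (hr k hk.1) (abs_nonneg _)
    simp only [hψ]
    linarith
  have hψmono : ∀ m n : ℤ, m ≤ n → ψ m ≤ ψ n := by
    intro m n hmn
    simp only [hψ]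
    have : ∑ k ∈ Finset.Icc a m, r k * |u k| ≤ ∑ k ∈ Finset.Icc a n, r k * |u k| := by
      apply Finset.sum_le_sum_of_subset_of_nonneg
      · intro x hx; rw [Finset.mem_Icc] at hx ⊢; omega
      · intro x hx _
        rw [Finset.mem_Icc] at hx
        exact mul_nonneg (hr x hx.1) (abs_nonneg _)
    linarith
  have hR0 : ∀ n : ℤ, 0 ≤ R n := by
    intro n
    exact Finset.sum_nonneg fun k hk => hr k (Finset.mem_Icc.mp hk).1
  have hCc0 : ∀ n : ℤ, 0 ≤ Cc n := by
    intro n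
    exact Finset.sum_nonneg fun k hk => mul_nonneg (hr k (Finset.mem_Icc.mp hk).1) (hW0 k)
  -- Fact 1
  have F1 : ∀ n : ℤ, a - 1 ≤ n → |p n * (u (n+1) - u n)| ≤ ψ n := by
    intro n hn
    rw [lemA p r a u hu n hn]
    refine le_trans (abs_add_le _ _) ?_
    simp only [hψ]
    refine add_le_add le_rfl (le_trans (Finset.abs_sum_le_sum_abs _ _) ?_)
    apply Finset.sum_le_sum
    intro k hk
    rw [Finset.mem_Icc] at hk
    rw [abs_mul, abs_of_nonneg (hr k hk.1)]
  -- Fact 2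
  have F2 : ∀ n : ℤ, a - 1 ≤ n → |u (n+1)| ≤ U0 + ψ n * W (n+1) := by
    intro n hn
    have hB2 := lemB u a (n+1) (by omega)
    have e : n + 1 - 1 = n := by ring
    rw [e] at hB2
    rw [hB2]
    refine le_trans (abs_add_le _ _) ?_
    rw [hU0]
    refine add_le_add le_rfl (le_trans (Finset.abs_sum_le_sum_abs _ _) ?_)
    have hWn : W (n+1) = ∑ τ ∈ Finset.Icc (a-1) n, 1 / p τ := by
      simp only [hW, e]
    rw [hWn, Finset.mul_sum]
    apply Finset.sum_le_sum
    intro τ hτ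
    rw [Finset.mem_Icc] at hτ
    have hpτ : 0 < p τ := hp τ (by omega)
    have h1 : |u (τ+1) - u τ| = |p τ * (u (τ+1) - u τ)| / p τ := by
      rw [abs_mul, abs_of_pos hpτ]
      field_simp
    rw [h1]
    have h2 : |p τ * (u (τ+1) - u τ)| ≤ ψ n :=
      le_trans (F1 τ hτ.1) (hψmono τ n hτ.2)
    rw [div_le_iff₀ hpτ]
    calc |p τ * (u (τ+1) - u τ)| ≤ ψ n := h2
      _ = ψ n * (1 / p τ) * p τ := by field_simp
  -- main induction
  have F3 : ∀ n : ℤ, a - 1 ≤ n → ψ n ≤ (B + U0 * R n) * Real.exp (Cc n) := by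
    refine Int.le_induction ?_ ?_
    · have h1 : Finset.Icc a (a-1) = ∅ := Finset.Icc_eq_empty (by omega)
      simp only [hψ, hR, hCc, h1, Finset.sum_empty, add_zero, mul_zero, Real.exp_zero, mul_one]
      exact le_rfl
    · intro n hn ih
      have hrn : 0 ≤ r (n+1) := hr (n+1) (by omega)
      have hstep : ψ (n+1) = ψ n + r (n+1) * |u (n+1)| := by
        simp only [hψ]
        rw [sum_icc_succ (by omega)]
        ring
      have hRstep : R (n+1) = R n + r (n+1) := by
        simp only [hR]; exact sum_icc_succ (by omega)
      have hCstep : Cc (n+1) = Cc n + r (n+1) * W (n+1) := by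
        simp only [hCc]; exact sum_icc_succ (by omega)
      have h2 := F2 n hn
      have h3 : ψ (n+1) ≤ ψ n * (1 + r (n+1) * W (n+1)) + r (n+1) * U0 := by
        have := mul_le_mul_of_nonneg_left h2 hrn
        rw [hstep]
        nlinarith [hψ0 n]
      set c := r (n+1) * W (n+1) with hc
      have hc0 : 0 ≤ c := mul_nonneg hrn (hW0 (n+1))
      have hexp1 : 1 + c ≤ Real.exp c := by linarith [Real.add_one_le_exp c]
      have hexp2 : Real.exp (Cc n) * Real.exp c = Real.exp (Cc n + c) := (Real.exp_add _ _).symm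
      have hexp3 : (1:ℝ) ≤ Real.exp (Cc n + c) := Real.one_le_exp (by
        have := hCc0 n
        linarith)
      have hX0 : 0 ≤ B + U0 * R n := by nlinarith [hR0 n]
      have hE0 : 0 < Real.exp (Cc n) := Real.exp_pos _
      rw [hCstep, hRstep]
      calc ψ (n+1) ≤ ψ n * (1 + c) + r (n+1) * U0 := h3
        _ ≤ (B + U0 * R n) * Real.exp (Cc n) * (1 + c) + r (n+1) * U0 := by
            have ha := mul_le_mul_of_nonneg_right ih (by linarith : (0:ℝ) ≤ 1 + c)
            linarith
        _ ≤ (B + U0 * R n) * Real.exp (Cc n) * Real.exp c + r (n+1) * U0 * Real.exp (Cc n + c) := by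
            have ha := mul_le_mul_of_nonneg_left hexp1 (mul_nonneg hX0 (le_of_lt hE0))
            have hb := le_mul_of_one_le_right (mul_nonneg hrn hU00) hexp3
            nlinarith
        _ = (B + U0 * (R n + r (n+1))) * Real.exp (Cc n + c) := by
            rw [mul_assoc, hexp2]; ring
  -- uniform bounds on R and Cc
  have hVa : ∑ τ ∈ Finset.Icc a (a-1), 1 / p τ = 0 := by
    rw [Finset.Icc_eq_empty (by omega)]; simp
  have hRCb : ∀ n : ℤ, a - 1 ≤ n → R n ≤ r a + p a * T ∧
      Cc n ≤ (r a + p a * T) * (1 / p (a-1)) + T := by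
    intro n hn
    set N := (n - a + 1).toNat with hN
    have hna : n ≤ a + (N : ℤ) := by omega
    have haN : a ≤ a + (N : ℤ) := by omega
    have hRmono : R n ≤ R (a + (N:ℤ)) := by
      simp only [hR]
      apply Finset.sum_le_sum_of_subset_of_nonneg
      · intro x hx; rw [Finset.mem_Icc] at hx ⊢; omega
      · intro x hx _; rw [Finset.mem_Icc] at hx; exact hr x hx.1
    have hCmono : Cc n ≤ Cc (a + (N:ℤ)) := by
      simp only [hCc]
      apply Finset.sum_le_sum_of_subset_of_nonneg
      · intro x hx; rw [Finset.mem_Icc] at hx ⊢; omega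
      · intro x hx _
        rw [Finset.mem_Icc] at hx
        exact mul_nonneg (hr x hx.1) (hW0 x)
    -- bound on tail sum of r
    have htail : ∑ k ∈ Finset.Icc (a+1) (a + (N:ℤ)), r k ≤ p a * T := by
      have h1 : ∑ k ∈ Finset.Icc (a+1) (a + (N:ℤ)), r k
          ≤ p a * ∑ k ∈ Finset.Icc (a+1) (a + (N:ℤ)), r k * ∑ τ ∈ Finset.Icc a (k-1), 1 / p τ := by
        rw [Finset.mul_sum]
        apply Finset.sum_le_sum
        intro k hk
        rw [Finset.mem_Icc] at hk
        have hV1 : 1 / p a ≤ ∑ τ ∈ Finset.Icc a (k-1), 1 / p τ := by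
          apply Finset.single_le_sum (f := fun τ => 1 / p τ)
          · intro τ hτ
            rw [Finset.mem_Icc] at hτ
            exact one_div_nonneg.mpr (le_of_lt (hp τ (by omega)))
          · rw [Finset.mem_Icc]; omega
        have hpa : 0 < p a := hp a (by omega)
        have hrk : 0 ≤ r k := hr k (by omega)
        have := mul_le_mul_of_nonneg_left hV1 hrk
        calc r k = p a * (r k * (1 / p a)) := by field_simp
          _ ≤ p a * (r k * ∑ τ ∈ Finset.Icc a (k-1), 1 / p τ) := by nlinarith
      calc ∑ k ∈ Finset.Icc (a+1) (a + (N:ℤ)), r k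
          ≤ p a * ∑ k ∈ Finset.Icc (a+1) (a + (N:ℤ)), r k * ∑ τ ∈ Finset.Icc a (k-1), 1 / p τ := h1
        _ ≤ p a * T := by
            have hpa : 0 < p a := hp a (by omega)
            exact mul_le_mul_of_nonneg_left (hpart N) (le_of_lt hpa)
    have hRb : R (a + (N:ℤ)) ≤ r a + p a * T := by
      simp only [hR]
      rw [sum_icc_bot haN]
      linarith
    constructor
    · exact le_trans hRmono hRb
    · refine le_trans hCmono ?_
      have hWsplit : ∀ k : ℤ, a ≤ k →
          W k = 1 / p (a-1) + ∑ τ ∈ Finset.Icc a (k-1), 1 / p τ := by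
        intro k hk
        simp only [hW]
        rw [sum_icc_bot (by omega : a - 1 ≤ k - 1), show a - 1 + 1 = a by ring]
      have hCeq : Cc (a + (N:ℤ)) = R (a + (N:ℤ)) * (1 / p (a-1))
          + ∑ k ∈ Finset.Icc a (a + (N:ℤ)), r k * ∑ τ ∈ Finset.Icc a (k-1), 1 / p τ := by
        simp only [hCc, hR]
        rw [Finset.sum_mul, ← Finset.sum_add_distrib]
        apply Finset.sum_congr rfl
        intro k hk
        rw [Finset.mem_Icc] at hk
        rw [hWsplit k hk.1]
        ring
      have hVsum : ∑ k ∈ Finset.Icc a (a + (N:ℤ)), r k * ∑ τ ∈ Finset.Icc a (k-1), 1 / p τ ≤ T := by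
        rw [sum_icc_bot haN]
        have : a - 1 = a - 1 := rfl
        rw [show (a:ℤ) - 1 = a - 1 from rfl]
        rw [hVa]  -- ∑ τ ∈ Icc a (a-1) = 0
        rw [mul_zero, zero_add]
        exact hpart N
      rw [hCeq]
      have hpainv : 0 < 1 / p (a-1) := one_div_pos.mpr (hp (a-1) le_rfl)
      nlinarith [hRb, hR0 (a + (N:ℤ))]
  refine ⟨(B + U0 * (r a + p a * T)) * Real.exp ((r a + p a * T) * (1 / p (a-1)) + T), ?_⟩
  intro n hn
  refine le_trans (F1 n hn) (le_trans (F3 n hn) ?_)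
  obtain ⟨hRn, hCn⟩ := hRCb n hn
  have h1 : B + U0 * R n ≤ B + U0 * (r a + p a * T) := by nlinarith
  have h2 : Real.exp (Cc n) ≤ Real.exp ((r a + p a * T) * (1 / p (a-1)) + T) :=
    Real.exp_le_exp.mpr hCn
  have h3 : 0 ≤ B + U0 * R n := by nlinarith [hR0 n]
  exact mul_le_mul h1 h2 (le_of_lt (Real.exp_pos _)) (by nlinarith [hR0 n, hT0, hr a (by omega : a ≤ a), le_of_lt (hp a (by omega : a - 1 ≤ a))])

private theorem fwd (p r : ℤ → ℝ) (a : ℤ)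
    (hp : ∀ n : ℤ, a - 1 ≤ n → 0 < p n) (hr : ∀ n : ℤ, a ≤ n → 0 ≤ r n)
    (hyp : ∀ u : ℤ → ℝ,
      (∀ n : ℤ, a ≤ n →
        p n * (u (n + 1) - u n) - p (n - 1) * (u n - u (n - 1)) = r n * u n) →
      ∃ C : ℝ, ∀ n : ℤ, a - 1 ≤ n → |p n * (u (n + 1) - u n)| ≤ C) :
    Summable (fun j : ℕ => ∑ τ ∈ Finset.Icc a (a + (j : ℤ)), r (a + (j : ℤ) + 1) / p τ) := by
  have hf0 : ∀ j : ℕ, 0 ≤ ∑ τ ∈ Finset.Icc a (a + (j : ℤ)), r (a + (j : ℤ) + 1) / p τ := by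
    intro j
    apply Finset.sum_nonneg
    intro τ hτ
    rw [Finset.mem_Icc] at hτ
    exact div_nonneg (hr _ (by omega)) (le_of_lt (hp τ (by omega)))
  by_cases hr0 : ∀ k : ℤ, a ≤ k → r k = 0
  · have he : (fun j : ℕ => ∑ τ ∈ Finset.Icc a (a + (j : ℤ)), r (a + (j : ℤ) + 1) / p τ)
        = fun _ => (0:ℝ) := by
      funext j
      apply Finset.sum_eq_zero
      intro τ _
      rw [hr0 _ (by omega)]
      simp
    rw [he]
    exact summable_zero
  · push_neg at hr0
    obtain ⟨k₀, hk₀a, hk₀⟩ := hr0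
    have hε : 0 < r k₀ := (hr k₀ hk₀a).lt_of_ne (Ne.symm hk₀)
    set u := mkU p r a with hudef
    have hu := mkU_rec p r a hp
    obtain ⟨C, hC⟩ := hyp u hu
    have hub1 : u (a-1) = 1 := (mkU_base p r a).1
    have hub2 : u a = 1 := (mkU_base p r a).2
    have hΦ0 : p (a-1) * (u a - u (a-1)) = 0 := by
      rw [hub1, hub2]; ring
    have hA := lemA p r a u hu
    have hC0 : 0 ≤ C := le_trans (abs_nonneg _) (hC (a-1) le_rfl)
    -- partial sums of r k * u k are ≤ C
    have hφub : ∀ n : ℤ, a - 1 ≤ n → ∑ k ∈ Finset.Icc a n, r k * u k ≤ C := by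
      intro n hn
      have h1 := hA n hn
      rw [hΦ0] at h1
      have h2 := hC n hn
      calc ∑ k ∈ Finset.Icc a n, r k * u k = p n * (u (n+1) - u n) := by rw [h1]; ring
        _ ≤ |p n * (u (n+1) - u n)| := le_abs_self _
        _ ≤ C := h2
    -- Φ τ ≥ ε for τ ≥ k₀
    have hεφ : ∀ τ : ℤ, k₀ ≤ τ → r k₀ ≤ p τ * (u (τ+1) - u τ) := by
      intro τ hτ
      have hmono := mkU_mono p r a hp hr k₀ (by omega) τ hτ
      have hk : r k₀ ≤ p k₀ * (u (k₀+1) - u k₀) := by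
        have h2 := hu k₀ hk₀a
        have h3 : 0 ≤ p (k₀-1) * (u (k₀-1+1) - u (k₀-1)) :=
          (mkU_pos p r a hp hr (k₀-1) (by omega)).2
        have e : k₀ - 1 + 1 = k₀ := by ring
        rw [e] at h3
        have h4 : 1 ≤ u k₀ := (mkU_pos p r a hp hr k₀ (by omega)).1
        nlinarith [hr k₀ hk₀a]
      exact le_trans hk hmono
    set D := ∑ τ ∈ Finset.Icc a (k₀-1), 1 / p τ with hD
    have hD0 : 0 ≤ D := Finset.sum_nonneg fun τ hτ => by
      rw [Finset.mem_Icc] at hτ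
      exact one_div_nonneg.mpr (le_of_lt (hp τ (by omega)))
    -- per-k bound
    have hkey : ∀ k : ℤ, a + 1 ≤ k →
        r k * ∑ τ ∈ Finset.Icc a (k-1), 1 / p τ ≤ r k * D + (1 / r k₀) * (r k * u k) := by
      intro k hk
      have hrk : 0 ≤ r k := hr k (by omega)
      have hsub : ∑ τ ∈ Finset.Icc a (k-1), 1 / p τ
          ≤ D + ∑ τ ∈ Finset.Icc k₀ (k-1), 1 / p τ := by
        rw [hD, ← Finset.sum_union (by
          rw [Finset.disjoint_left]
          intro x hx hy
          rw [Finset.mem_Icc] at hx hy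
          omega)]
        apply Finset.sum_le_sum_of_subset_of_nonneg
        · intro x hx
          rw [Finset.mem_Icc] at hx
          rw [Finset.mem_union, Finset.mem_Icc, Finset.mem_Icc]
          omega
        · intro x hx _
          rw [Finset.mem_union, Finset.mem_Icc, Finset.mem_Icc] at hx
          exact one_div_nonneg.mpr (le_of_lt (hp x (by omega)))
      have h2 : ∑ τ ∈ Finset.Icc k₀ (k-1), 1 / p τ
          ≤ (1 / r k₀) * ∑ τ ∈ Finset.Icc k₀ (k-1), (p τ * (u (τ+1) - u τ)) / p τ := by
        rw [Finset.mul_sum]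
        apply Finset.sum_le_sum
        intro τ hτ
        rw [Finset.mem_Icc] at hτ
        have hpτ : 0 < p τ := hp τ (by omega)
        have hφτ := hεφ τ hτ.1
        rw [show (1 : ℝ) / r k₀ * (p τ * (u (τ+1) - u τ) / p τ)
            = (p τ * (u (τ+1) - u τ)) / (r k₀ * p τ) by ring]
        rw [div_le_div_iff₀ hpτ (by positivity)]
        nlinarith
      have h3 : ∑ τ ∈ Finset.Icc k₀ (k-1), (p τ * (u (τ+1) - u τ)) / p τ ≤ u k := by
        have hB := lemB u a k (by omega)
        have heq : ∑ τ ∈ Finset.Icc (a-1) (k-1), (u (τ+1) - u τ)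
            = ∑ τ ∈ Finset.Icc (a-1) (k-1), (p τ * (u (τ+1) - u τ)) / p τ := by
          apply Finset.sum_congr rfl
          intro τ hτ
          rw [Finset.mem_Icc] at hτ
          have hpτ : p τ ≠ 0 := ne_of_gt (hp τ (by omega))
          field_simp
        have hsub2 : ∑ τ ∈ Finset.Icc k₀ (k-1), (p τ * (u (τ+1) - u τ)) / p τ
            ≤ ∑ τ ∈ Finset.Icc (a-1) (k-1), (p τ * (u (τ+1) - u τ)) / p τ := by
          apply Finset.sum_le_sum_of_subset_of_nonneg
          · intro x hx
            rw [Finset.mem_Icc] at hx ⊢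
            omega
          · intro x hx _
            rw [Finset.mem_Icc] at hx
            have hpx : 0 < p x := hp x (by omega)
            exact div_nonneg ((mkU_pos p r a hp hr x (by omega)).2) (le_of_lt hpx)
        have hu1 : 1 ≤ u k := (mkU_pos p r a hp hr k (by omega)).1
        rw [hub1, heq] at hB
        linarith
      have step : ∑ τ ∈ Finset.Icc a (k-1), 1 / p τ ≤ D + (1 / r k₀) * u k := by
        calc ∑ τ ∈ Finset.Icc a (k-1), 1 / p τ ≤ D + ∑ τ ∈ Finset.Icc k₀ (k-1), 1 / p τ := hsub
          _ ≤ D + (1 / r k₀) * ∑ τ ∈ Finset.Icc k₀ (k-1), (p τ * (u (τ+1) - u τ)) / p τ := by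
              linarith
          _ ≤ D + (1 / r k₀) * u k := by
              have := mul_le_mul_of_nonneg_left h3 (le_of_lt (one_div_pos.mpr hε))
              linarith
      calc r k * ∑ τ ∈ Finset.Icc a (k-1), 1 / p τ ≤ r k * (D + (1 / r k₀) * u k) :=
            mul_le_mul_of_nonneg_left step hrk
        _ = r k * D + (1 / r k₀) * (r k * u k) := by ring
    -- assemble
    apply summable_of_sum_range_le (c := D * C + (1 / r k₀) * C) hf0
    intro N
    rw [lemReidx p r a N]
    have hsum1 : ∑ k ∈ Finset.Icc (a+1) (a + (N:ℤ)), r k * u k ≤ C := by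
      refine le_trans ?_ (hφub (a + (N:ℤ)) (by omega))
      apply Finset.sum_le_sum_of_subset_of_nonneg
      · intro x hx
        rw [Finset.mem_Icc] at hx ⊢
        omega
      · intro x hx _
        rw [Finset.mem_Icc] at hx
        exact mul_nonneg (hr x (by omega))
          (le_trans zero_le_one (mkU_pos p r a hp hr x (by omega)).1)
    have hsum2 : ∑ k ∈ Finset.Icc (a+1) (a + (N:ℤ)), r k ≤ C := by
      refine le_trans ?_ hsum1
      apply Finset.sum_le_sum
      intro k hk
      rw [Finset.mem_Icc] at hk
      have := (mkU_pos p r a hp hr k (by omega)).1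
      nlinarith [hr k (by omega : a ≤ k)]
    calc ∑ k ∈ Finset.Icc (a+1) (a + (N:ℤ)), r k * ∑ τ ∈ Finset.Icc a (k-1), 1 / p τ
        ≤ ∑ k ∈ Finset.Icc (a+1) (a + (N:ℤ)), (r k * D + (1 / r k₀) * (r k * u k)) := by
          apply Finset.sum_le_sum
          intro k hk
          rw [Finset.mem_Icc] at hk
          exact hkey k hk.1
      _ = (∑ k ∈ Finset.Icc (a+1) (a + (N:ℤ)), r k) * D
          + (1 / r k₀) * ∑ k ∈ Finset.Icc (a+1) (a + (N:ℤ)), r k * u k := by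
          rw [Finset.sum_add_distrib, Finset.sum_mul, Finset.mul_sum]
      _ ≤ D * C + (1 / r k₀) * C := by
          have h1 : (∑ k ∈ Finset.Icc (a+1) (a + (N:ℤ)), r k) * D ≤ C * D :=
            mul_le_mul_of_nonneg_right hsum2 hD0
          have h2 : (1 / r k₀) * ∑ k ∈ Finset.Icc (a+1) (a + (N:ℤ)), r k * u k ≤ (1 / r k₀) * C :=
            mul_le_mul_of_nonneg_left hsum1 (le_of_lt (one_div_pos.mpr hε))
          linarith


/-- Proposition 8: for `p > 0`, `r ≥ 0`, every solution `u` of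
`Δ(p(n-1)Δu(n-1)) = r(n)u(n)` has `φ(n) = p(n)Δu(n)` bounded iff
`Σ_{s=a}^∞ Σ_{τ=a}^{s} r(s+1)/p(τ) < ∞`. -/
theorem quasi_derivative_bounded_iff (p r : ℤ → ℝ) (a : ℤ)
    (hp : ∀ n : ℤ, a - 1 ≤ n → 0 < p n) (hr : ∀ n : ℤ, a ≤ n → 0 ≤ r n) :
    (∀ u : ℤ → ℝ,
      (∀ n : ℤ, a ≤ n →
        p n * (u (n + 1) - u n) - p (n - 1) * (u n - u (n - 1)) = r n * u n) →
      ∃ C : ℝ, ∀ n : ℤ, a - 1 ≤ n → |p n * (u (n + 1) - u n)| ≤ C) ↔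
    Summable (fun j : ℕ => ∑ τ ∈ Finset.Icc a (a + (j : ℤ)), r (a + (j : ℤ) + 1) / p τ) := by
  constructor
  · exact fwd p r a hp hr
  · intro hsum u hu
    exact bwd p r a hp hr hsum u hu
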